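/- Let G = (V, E) be a finite directed graph with lower and upper arc capacities l ≤ u (natural-number valued), disjoint source and sink sets S, T ⊆ V, demand/supply function d : V → ℤ with d < 0 on S, d > 0 on T, d = 0 elsewhere, and −d(S) = d(T). Let Ĝ be the circulation network obtained from G by adding oriented tree arcs with fixed flow values d(V_{T'}(v, w)) as in the Miller–Naor construction, for a tree T' spanning S ∪ T. Let R ⊆ (V ∖ (S ∪ T)) ∪ E be any interdiction set, and let Ĝ(R) denote the graph obtained from Ĝ by removing all arcs of E contained in R and all arcs of E incident to a vertex in R (the added tree arcs are never removed). Let G ∖ R denote the graph obtained from G by removing the arcs and vertices in R (together with all arcs incident to removed vertices). Then G ∖ R admits a saturating flow if and only if Ĝ(R) admits a circulation. -/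

import Mathlib

open scoped Classical

/-- Net outflow of the function `f` at the vertex `v` in the directed graph whose arcs
are the elements of `E`, with tails `esrc` and heads `edst`. -/
noncomputable def netOutflow {V E : Type*} [Fintype E] (esrc edst : E → V)
    (f : E → ℝ) (v : V) : ℝ :=
  (∑ e ∈ Finset.univ.filter (fun e => esrc e = v), f e) -
    ∑ e ∈ Finset.univ.filter (fun e => edst e = v), f e

/-- A saturating flow: the flow respects the lower and upper capacities and every vertex
`v` has net outflow `-d v`. -/
def IsSaturatingFlow {V E : Type*} [Fintype E] (esrc edst : E → V)
    (l u : E → ℕ) (d : V → ℤ) (f : E → ℝ) : Prop :=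
  (∀ e, (l e : ℝ) ≤ f e ∧ f e ≤ (u e : ℝ)) ∧
  ∀ v, netOutflow esrc edst f v = -(d v : ℝ)

/-- A circulation: the flow respects the lower and upper bounds and is conserved at
every vertex. -/
def IsCirculation {V E : Type*} [Fintype E] (esrc edst : E → V)
    (lo hi : E → ℤ) (g : E → ℝ) : Prop :=
  (∀ e, (lo e : ℝ) ≤ g e ∧ g e ≤ (hi e : ℝ)) ∧
  ∀ v, netOutflow esrc edst g v = 0

/-- `treeSide Tr d v w` is `d(V_{T'}(v, w))`: the sum of the demands over the set of
vertices that remain connected to `v` in the tree `Tr` after deleting the edge `{v, w}`. -/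
noncomputable def treeSide {V : Type*} [Fintype V] (Tr : SimpleGraph V) (d : V → ℤ)
    (v w : V) : ℤ :=
  ∑ x ∈ Finset.univ.filter
      (fun x => (Tr.deleteEdges {Sym2.mk v w}).Reachable v x), d x

/-- The arcs obtained by orienting the edges of the tree `Tr`: the edge `{v, w}` is
oriented from `v` to `w` if `d(V_{T'}(v, w)) ≥ 0` and from `w` to `v` otherwise
(breaking ties, when `d(V_{T'}(v, w)) = 0`, by the linear order on `V`). -/
def TreeArc {V : Type*} [Fintype V] [LinearOrder V] (Tr : SimpleGraph V) (d : V → ℤ) :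
    Type _ :=
  {q : V × V // Tr.Adj q.1 q.2 ∧ 0 ≤ treeSide Tr d q.1 q.2 ∧
    (treeSide Tr d q.1 q.2 = 0 → q.1 ≤ q.2)}

noncomputable instance {V : Type*} [Fintype V] [LinearOrder V] (Tr : SimpleGraph V)
    (d : V → ℤ) : Fintype (TreeArc Tr d) := by
  unfold TreeArc; infer_instance

open SimpleGraph Finset

section WalkLemmas
variable {V : Type*} (Tr : SimpleGraph V)

/-- One step closure: the union of the two delete-components is closed under adjacency. -/
lemma step_closure {v w a c : V} (h : Tr.Adj a c)
    (ha : (Tr.deleteEdges {Sym2.mk v w}).Reachable a v ∨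
          (Tr.deleteEdges {Sym2.mk v w}).Reachable a w) :
    (Tr.deleteEdges {Sym2.mk v w}).Reachable c v ∨
    (Tr.deleteEdges {Sym2.mk v w}).Reachable c w := by
  by_cases he : Sym2.mk a c = Sym2.mk v w
  · rw [Sym2.eq, Sym2.rel_iff'] at he
    rcases he with ⟨rfl, rfl⟩ | h2
    · right; exact SimpleGraph.Reachable.refl _
    · simp only [Prod.mk.injEq, Prod.swap_prod_mk] at h2
      obtain ⟨rfl, rfl⟩ := h2
      left; exact SimpleGraph.Reachable.refl _
  · have hadj : (Tr.deleteEdges {Sym2.mk v w}).Adj c a := by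
      rw [SimpleGraph.deleteEdges_adj]
      exact ⟨h.symm, by simpa [Sym2.eq_swap] using he⟩
    rcases ha with h1 | h1
    · left; exact hadj.reachable.trans h1
    · right; exact hadj.reachable.trans h1

lemma walk_closure {v w : V} {a b : V} (p : Tr.Walk a b)
    (ha : (Tr.deleteEdges {Sym2.mk v w}).Reachable a v ∨
          (Tr.deleteEdges {Sym2.mk v w}).Reachable a w) :
    (Tr.deleteEdges {Sym2.mk v w}).Reachable b v ∨
    (Tr.deleteEdges {Sym2.mk v w}).Reachable b w := by
  induction p with
  | nil => exact ha
  | cons h q ih => exact ih (step_closure Tr h ha)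

lemma reach_split {v w x : V} (h : Tr.Reachable v x) :
    (Tr.deleteEdges {Sym2.mk v w}).Reachable v x ∨
    (Tr.deleteEdges {Sym2.mk v w}).Reachable w x := by
  obtain ⟨p⟩ := h
  have := walk_closure Tr (w := w) p (Or.inl (SimpleGraph.Reachable.refl v))
  exact this.imp SimpleGraph.Reachable.symm SimpleGraph.Reachable.symm

lemma bridge_not_reach {v w : V} (hacyc : Tr.IsAcyclic) (ha : Tr.Adj v w) :
    ¬ (Tr.deleteEdges {Sym2.mk v w}).Reachable v w :=
  ((SimpleGraph.isBridge_iff.mp ((SimpleGraph.isAcyclic_iff_forall_adj_isBridge.mp hacyc) ha)))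



end WalkLemmas

section MN
variable {V : Type*} [Fintype V] (Tr : SimpleGraph V)
  (S T : Finset V) (hST : Disjoint S T) (d : V → ℤ)
  (hdS : ∀ s ∈ S, d s < 0) (hdT : ∀ t ∈ T, 0 < d t)
  (hd0 : ∀ v, v ∉ S → v ∉ T → d v = 0)
  (hbal : -(∑ s ∈ S, d s) = ∑ t ∈ T, d t)
  (hacyc : Tr.IsAcyclic)
  (hconn : ∀ a ∈ Tr.support ∪ ↑S ∪ ↑T, ∀ b ∈ Tr.support ∪ ↑S ∪ ↑T, Tr.Reachable a b)

include hST hdS hdT hd0 hbal hconn in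
lemma comp_sum_zero {v : V} (hv : v ∈ Tr.support) :
    ∑ x ∈ Finset.univ.filter (fun x => Tr.Reachable v x), d x = 0 := by
  have hsub : S ∪ T ⊆ Finset.univ.filter (fun x => Tr.Reachable v x) := by
    intro s hs
    rw [Finset.mem_filter]
    refine ⟨Finset.mem_univ _, hconn v (Or.inl (Or.inl hv)) s ?_⟩
    rcases Finset.mem_union.mp hs with h | h
    · exact Or.inl (Or.inr h)
    · exact Or.inr h
  have h1 : ∑ x ∈ Finset.univ.filter (fun x => Tr.Reachable v x), d x
      = ∑ x ∈ S ∪ T, d x :=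
    (Finset.sum_subset hsub (fun x _ hnx =>
      hd0 x (fun h => hnx (Finset.mem_union_left _ h))
        (fun h => hnx (Finset.mem_union_right _ h)))).symm
  rw [h1, Finset.sum_union hST]
  linarith

include hST hdS hdT hbal hconn in
lemma terminal_mem_support {v : V} (hv : v ∈ S ∨ v ∈ T) : v ∈ Tr.support := by
  rcases hv with hvS | hvT
  · have hT : T.Nonempty := by
      by_contra h
      rw [Finset.not_nonempty_iff_eq_empty] at h
      subst h
      simp only [Finset.sum_empty] at hbal
      have : ∑ s ∈ S, d s < 0 := Finset.sum_neg hdS ⟨v, hvS⟩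
      omega
    obtain ⟨t, ht⟩ := hT
    have hne : v ≠ t := fun h => Finset.disjoint_left.mp hST hvS (h ▸ ht)
    obtain ⟨p⟩ := hconn v (Or.inl (Or.inr hvS)) t (Or.inr ht)
    cases p with
    | nil => exact absurd rfl hne
    | cons h q => exact (SimpleGraph.mem_support _).mpr ⟨_, h⟩
  · have hS : S.Nonempty := by
      by_contra h
      rw [Finset.not_nonempty_iff_eq_empty] at h
      subst h
      simp only [Finset.sum_empty, neg_zero] at hbal
      have : 0 < ∑ t ∈ T, d t := Finset.sum_pos hdT ⟨v, hvT⟩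
      omega
    obtain ⟨s, hs⟩ := hS
    have hne : v ≠ s := fun h => Finset.disjoint_left.mp hST (h ▸ hs) hvT
    obtain ⟨p⟩ := hconn v (Or.inr hvT) s (Or.inl (Or.inr hs))
    cases p with
    | nil => exact absurd rfl hne
    | cons h q => exact (SimpleGraph.mem_support _).mpr ⟨_, h⟩

lemma del_reach_disjoint {v w : V} (hacyc : Tr.IsAcyclic) (ha : Tr.Adj v w) {x : V}
    (h1 : (Tr.deleteEdges {Sym2.mk v w}).Reachable v x)
    (h2 : (Tr.deleteEdges {Sym2.mk v w}).Reachable w x) : False := by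
  have : ¬ (Tr.deleteEdges {Sym2.mk v w}).Reachable v w :=
    ((SimpleGraph.isBridge_iff.mp ((SimpleGraph.isAcyclic_iff_forall_adj_isBridge.mp hacyc) ha)))
  exact this (h1.trans h2.symm)

include hST hdS hdT hd0 hbal hacyc hconn in
lemma treeSide_antisymm {v w : V} (ha : Tr.Adj v w) :
    treeSide Tr d v w + treeSide Tr d w v = 0 := by
  have hsw : (Sym2.mk w v) = Sym2.mk v w := Sym2.eq_swap
  unfold treeSide
  rw [hsw]
  have hdisj : Disjoint
      (Finset.univ.filter (fun x => (Tr.deleteEdges {Sym2.mk v w}).Reachable v x))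
      (Finset.univ.filter (fun x => (Tr.deleteEdges {Sym2.mk v w}).Reachable w x)) := by
    rw [Finset.disjoint_left]
    intro x hx hx'
    exact del_reach_disjoint Tr hacyc ha (Finset.mem_filter.mp hx).2 (Finset.mem_filter.mp hx').2
  rw [← Finset.sum_union hdisj, ← Finset.filter_or]
  have : Finset.univ.filter (fun x => (Tr.deleteEdges {Sym2.mk v w}).Reachable v x ∨
      (Tr.deleteEdges {Sym2.mk v w}).Reachable w x)
      = Finset.univ.filter (fun x => Tr.Reachable v x) := by
    apply Finset.filter_congr
    intro x _
    constructor
    · rintro (h | h)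
      · exact h.mono (SimpleGraph.deleteEdges_le _)
      · exact ha.reachable.trans (h.mono (SimpleGraph.deleteEdges_le _))
    · exact fun h => reach_split Tr h
  rw [this]
  exact comp_sum_zero Tr S T hST d hdS hdT hd0 hbal hconn ⟨w, ha⟩
lemma bridge' {v w : V} (hacyc : Tr.IsAcyclic) (ha : Tr.Adj v w) :
    ¬ (Tr.deleteEdges {Sym2.mk v w}).Reachable v w :=
  ((SimpleGraph.isBridge_iff.mp
    ((SimpleGraph.isAcyclic_iff_forall_adj_isBridge.mp hacyc) ha)))

include hacyc in
lemma comp_partition (v : V) :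
    Finset.univ.filter (fun x => Tr.Reachable v x) =
      insert v ((Finset.univ.filter (fun w => Tr.Adj v w)).biUnion
        (fun w => Finset.univ.filter
          (fun x => (Tr.deleteEdges {Sym2.mk v w}).Reachable w x))) := by
  haveI := Classical.decEq V
  ext x
  simp only [Finset.mem_filter, Finset.mem_univ, true_and, Finset.mem_insert,
    Finset.mem_biUnion]
  constructor
  · intro hr
    by_cases hx : x = v
    · exact Or.inl hx
    · right
      obtain ⟨pw, hpw⟩ := (Classical.choice hr).toPath
      cases pw with
      | nil => exact absurd rfl (Ne.symm hx)
      | @cons _ w _ h q =>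
          rw [SimpleGraph.Walk.cons_isPath_iff] at hpw
          refine ⟨w, h, ?_⟩
          refine ⟨q.toDeleteEdges _ (fun e he hmem => ?_)⟩
          rw [Set.mem_singleton_iff] at hmem
          subst hmem
          exact hpw.2 (q.fst_mem_support_of_mem_edges he)
  · rintro (rfl | ⟨w, hadj, hreach⟩)
    · exact SimpleGraph.Reachable.refl _
    · exact hadj.reachable.trans (hreach.mono (SimpleGraph.deleteEdges_le _))

include hacyc in
lemma branches_disjoint {v : V} :
    (↑(Finset.univ.filter (fun w => Tr.Adj v w)) : Set V).PairwiseDisjoint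
      (fun w => Finset.univ.filter
        (fun x => (Tr.deleteEdges {Sym2.mk v w}).Reachable w x)) := by
  haveI := Classical.decEq V
  intro w1 h1 w2 h2 hne
  simp only [Finset.coe_filter, Set.mem_setOf_eq, Finset.mem_univ, true_and] at h1 h2
  refine Finset.disjoint_left.mpr ?_
  intro x hx1 hx2
  simp only [Finset.mem_filter, Finset.mem_univ, true_and] at hx1 hx2
  have hr1 := hx1
  obtain ⟨p2⟩ := hx2
  have hvs : v ∉ p2.support := by
    intro hmem
    exact bridge' Tr hacyc h2 ((p2.takeUntil v hmem).reachable).symm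
  have hne2 : Sym2.mk v w2 ≠ Sym2.mk v w1 := by
    intro heq
    rcases Sym2.eq_iff.mp heq with ⟨-, h⟩ | ⟨h, -⟩
    · exact hne h.symm
    · exact Tr.irrefl (by rwa [← h] at h1)
  have p2t : (Tr.deleteEdges {Sym2.mk v w1}).Walk w2 x := by
    refine p2.transfer _ (fun e he => ?_)
    rw [SimpleGraph.edgeSet_deleteEdges, Set.mem_diff, Set.mem_singleton_iff]
    have heT : e ∈ Tr.edgeSet := by
      have := p2.edges_subset_edgeSet he
      rw [SimpleGraph.edgeSet_deleteEdges] at this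
      exact this.1
    refine ⟨heT, fun heq => ?_⟩
    subst heq
    exact hvs (p2.fst_mem_support_of_mem_edges he)
  have hadj2 : (Tr.deleteEdges {Sym2.mk v w1}).Adj v w2 := by
    rw [SimpleGraph.deleteEdges_adj]
    exact ⟨h2, by simpa using hne2⟩
  exact bridge' Tr hacyc h1 (hadj2.reachable.trans (p2t.reachable.trans hr1.symm))

include hST hdS hdT hd0 hbal hacyc hconn in
lemma nbr_sum (v : V) :
    ∑ w ∈ Finset.univ.filter (fun w => Tr.Adj v w), treeSide Tr d v w = d v := by
  by_cases hv : v ∈ Tr.support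
  · have hzero := comp_sum_zero Tr S T hST d hdS hdT hd0 hbal hconn hv
    rw [comp_partition Tr hacyc v] at hzero
    have hnot : v ∉ (Finset.univ.filter (fun w => Tr.Adj v w)).biUnion
        (fun w => Finset.univ.filter
          (fun x => (Tr.deleteEdges {Sym2.mk v w}).Reachable w x)) := by
      simp only [Finset.mem_biUnion, Finset.mem_filter, Finset.mem_univ, true_and, not_exists,
        not_and]
      intro w hadj hreach
      exact bridge' Tr hacyc hadj hreach.symm
    rw [Finset.sum_insert hnot, Finset.sum_biUnion (branches_disjoint Tr hacyc)] at hzero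
    have hcong : ∀ w ∈ Finset.univ.filter (fun w => Tr.Adj v w),
        treeSide Tr d v w = -∑ x ∈ Finset.univ.filter
          (fun x => (Tr.deleteEdges {Sym2.mk v w}).Reachable w x), d x := by
      intro w hw
      rw [Finset.mem_filter] at hw
      have hanti := treeSide_antisymm Tr S T hST d hdS hdT hd0 hbal hacyc hconn hw.2
      have : treeSide Tr d w v = ∑ x ∈ Finset.univ.filter
          (fun x => (Tr.deleteEdges {Sym2.mk v w}).Reachable w x), d x := by
        unfold treeSide
        rw [show (Sym2.mk w v) = Sym2.mk v w from Sym2.eq_swap]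
      omega
    rw [Finset.sum_congr rfl hcong, Finset.sum_neg_distrib]
    omega
  · have h1 : Finset.univ.filter (fun w => Tr.Adj v w) = ∅ := by
      rw [Finset.filter_eq_empty_iff]
      intro w _ hadj
      exact hv ⟨w, hadj⟩
    rw [h1, Finset.sum_empty]
    exact (hd0 v (fun h => hv (terminal_mem_support Tr S T hST d hdS hdT hbal hconn (Or.inl h)))
      (fun h => hv (terminal_mem_support Tr S T hST d hdS hdT hbal hconn (Or.inr h)))).symm
end MN

/-- The predicate carving tree arcs out of `V × V`. -/
def ArcP {V : Type*} [Fintype V] [LinearOrder V] (Tr : SimpleGraph V) (d : V → ℤ)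
    (p : V × V) : Prop :=
  Tr.Adj p.1 p.2 ∧ 0 ≤ treeSide Tr d p.1 p.2 ∧ (treeSide Tr d p.1 p.2 = 0 → p.1 ≤ p.2)

/-- Signed contribution of a potential arc `p` to the flux at `v`. -/
noncomputable def Fv {V : Type*} [Fintype V] (Tr : SimpleGraph V) (d : V → ℤ)
    (v : V) (p : V × V) : ℤ :=
  if p.1 = v then treeSide Tr d v p.2 else if p.2 = v then treeSide Tr d v p.1 else 0

section
variable {V : Type*} [Fintype V] [LinearOrder V] (Tr : SimpleGraph V)
  (S T : Finset V) (hST : Disjoint S T) (d : V → ℤ)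
  (hdS : ∀ s ∈ S, d s < 0) (hdT : ∀ t ∈ T, 0 < d t)
  (hd0 : ∀ v, v ∉ S → v ∉ T → d v = 0)
  (hbal : -(∑ s ∈ S, d s) = ∑ t ∈ T, d t)
  (hacyc : Tr.IsAcyclic)
  (hconn : ∀ a ∈ Tr.support ∪ ↑S ∪ ↑T, ∀ b ∈ Tr.support ∪ ↑S ∪ ↑T, Tr.Reachable a b)

include hST hdS hdT hd0 hbal hacyc hconn in
lemma arc_flux (v : V) :
    ((∑ q ∈ Finset.univ.filter (fun q : TreeArc Tr d => q.val.1 = v),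
        treeSide Tr d q.val.1 q.val.2)
      - ∑ q ∈ Finset.univ.filter (fun q : TreeArc Tr d => q.val.2 = v),
        treeSide Tr d q.val.1 q.val.2) = d v := by
  classical
  have hanti : ∀ {a b : V}, Tr.Adj a b → treeSide Tr d a b + treeSide Tr d b a = 0 :=
    fun h => treeSide_antisymm Tr S T hST d hdS hdT hd0 hbal hacyc hconn h
  have step12 : ((∑ q ∈ Finset.univ.filter (fun q : TreeArc Tr d => q.val.1 = v),
        treeSide Tr d q.val.1 q.val.2)
      - ∑ q ∈ Finset.univ.filter (fun q : TreeArc Tr d => q.val.2 = v),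
        treeSide Tr d q.val.1 q.val.2) = ∑ q : TreeArc Tr d, Fv Tr d v q.val := by
    rw [Finset.sum_filter, Finset.sum_filter, ← Finset.sum_sub_distrib]
    apply Finset.sum_congr rfl
    intro q _
    obtain ⟨hadj, -, -⟩ := q.2
    unfold Fv
    rcases eq_or_ne q.val.1 v with h1 | h1
    · have h2 : q.val.2 ≠ v := fun h => Tr.irrefl (h1 ▸ h ▸ hadj)
      simp [h1, h2]
    · rcases eq_or_ne q.val.2 v with h2 | h2
      · have ha2 : Tr.Adj q.val.1 v := h2 ▸ hadj
        have := hanti ha2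
        simp only [if_neg h1, if_pos h2, zero_sub, h2, if_true]
        linarith
      · simp [h1, h2]
  rw [step12]
  have step3 : ∑ q : TreeArc Tr d, Fv Tr d v q.val
      = ∑ p ∈ Finset.univ.filter (ArcP Tr d), Fv Tr d v p := by
    refine Finset.sum_bij' (fun (q : TreeArc Tr d) (_ : q ∈ Finset.univ) => q.val)
      (fun p hp => (⟨p, (Finset.mem_filter.mp hp).2⟩ : TreeArc Tr d)) ?_ ?_ ?_ ?_ ?_
    · intro q _
      simp only [Finset.mem_filter, Finset.mem_univ, true_and]
      exact q.2
    · intro p hp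
      exact Finset.mem_univ _
    · intro q _
      rfl
    · intro p hp
      rfl
    · intro q _
      rfl
  rw [step3]
  have step4 : ∑ p ∈ Finset.univ.filter (ArcP Tr d), Fv Tr d v p
      = ∑ p ∈ Finset.univ.filter (fun p => ArcP Tr d p ∧ (p.1 = v ∨ p.2 = v)),
          Fv Tr d v p := by
    have hsub : (Finset.univ.filter (fun p : V × V => ArcP Tr d p ∧ (p.1 = v ∨ p.2 = v)))
        ⊆ Finset.univ.filter (ArcP Tr d) := by
      intro p hp
      simp only [Finset.mem_filter, Finset.mem_univ, true_and] at hp ⊢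
      exact hp.1
    refine (Finset.sum_subset hsub ?_).symm
    · intro p hp hnp
      simp only [Finset.mem_filter, Finset.mem_univ, true_and] at hp hnp
      have h : ¬(p.1 = v ∨ p.2 = v) := fun ht => hnp ⟨hp, ht⟩
      push_neg at h
      unfold Fv
      rw [if_neg h.1, if_neg h.2]
  rw [step4]
  have step5 : ∑ p ∈ Finset.univ.filter (fun p => ArcP Tr d p ∧ (p.1 = v ∨ p.2 = v)),
      Fv Tr d v p = ∑ w ∈ Finset.univ.filter (fun w => Tr.Adj v w), treeSide Tr d v w := by
    apply Finset.sum_nbij' (fun p => if p.1 = v then p.2 else p.1)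
      (fun w => if 0 ≤ treeSide Tr d v w ∧ (treeSide Tr d v w = 0 → v ≤ w)
        then (v, w) else (w, v))
    · intro p hp
      simp only [Finset.mem_filter, Finset.mem_univ, true_and] at hp ⊢
      obtain ⟨⟨hadj, -, -⟩, htouch⟩ := hp
      rcases eq_or_ne p.1 v with h1 | h1
      · rw [if_pos h1]; exact h1 ▸ hadj
      · rw [if_neg h1]
        have h2 : p.2 = v := htouch.resolve_left h1
        exact (h2 ▸ hadj).symm
    · intro w hw
      simp only [Finset.mem_filter, Finset.mem_univ, true_and] at hw ⊢
      by_cases hc : 0 ≤ treeSide Tr d v w ∧ (treeSide Tr d v w = 0 → v ≤ w)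
      · rw [if_pos hc]
        exact ⟨⟨hw, hc.1, hc.2⟩, Or.inl rfl⟩
      · rw [if_neg hc]
        push_neg at hc
        have h0 := hanti hw
        refine ⟨⟨hw.symm, ?_, ?_⟩, Or.inr rfl⟩
        · rcases lt_or_ge (treeSide Tr d v w) 0 with h | h
          · linarith
          · obtain ⟨ha0, -⟩ := hc h
            linarith
        · intro hz
          have ha0 : treeSide Tr d v w = 0 := by linarith
          obtain ⟨-, hwv⟩ := hc ha0.ge
          exact hwv.le
    · -- left inverse
      intro p hp
      simp only [Finset.mem_filter, Finset.mem_univ, true_and] at hp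
      obtain ⟨⟨hadj, hge, hle⟩, htouch⟩ := hp
      rcases eq_or_ne p.1 v with h1 | h1
      · rw [if_pos h1, if_pos (by rw [← h1]; exact ⟨hge, hle⟩)]
        exact Prod.ext h1.symm rfl
      · have h2 : p.2 = v := htouch.resolve_left h1
        rw [if_neg h1]
        have h0 : treeSide Tr d p.1 v + treeSide Tr d v p.1 = 0 := hanti (h2 ▸ hadj)
        have hge' : 0 ≤ treeSide Tr d p.1 v := by rw [← h2]; exact hge
        have hcond : ¬(0 ≤ treeSide Tr d v p.1 ∧ (treeSide Tr d v p.1 = 0 → v ≤ p.1)) := by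
          rintro ⟨hge2, hle2⟩
          have hz : treeSide Tr d v p.1 = 0 := by linarith
          have hz' : treeSide Tr d p.1 p.2 = 0 := by rw [h2]; linarith
          have := hle hz'
          rw [h2] at this
          exact h1 (le_antisymm this (hle2 hz))
        rw [if_neg hcond]
        exact Prod.ext rfl h2.symm
    · -- right inverse
      intro w hw
      simp only [Finset.mem_filter, Finset.mem_univ, true_and] at hw
      by_cases hc : 0 ≤ treeSide Tr d v w ∧ (treeSide Tr d v w = 0 → v ≤ w)
      · rw [if_pos hc, if_pos rfl]
      · rw [if_neg hc, if_neg hw.ne']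
    · -- value compatibility
      intro p hp
      simp only [Finset.mem_filter, Finset.mem_univ, true_and] at hp
      obtain ⟨⟨hadj, -, -⟩, htouch⟩ := hp
      unfold Fv
      rcases eq_or_ne p.1 v with h1 | h1
      · rw [if_pos h1, if_pos h1]
      · have h2 : p.2 = v := htouch.resolve_left h1
        rw [if_neg h1, if_neg h1, if_pos h2]
  rw [step5]
  exact nbr_sum Tr S T hST d hdS hdT hd0 hbal hacyc hconn v
end


lemma netOutflow_sum_elim {V E₁ E₂ : Type*} [Fintype E₁] [Fintype E₂]
    (s₁ t₁ : E₁ → V) (s₂ t₂ : E₂ → V) (g₁ : E₁ → ℝ) (g₂ : E₂ → ℝ) (v : V) :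
    netOutflow (Sum.elim s₁ s₂) (Sum.elim t₁ t₂) (Sum.elim g₁ g₂) v
      = netOutflow s₁ t₁ g₁ v + netOutflow s₂ t₂ g₂ v := by
  unfold netOutflow
  rw [Finset.sum_filter, Finset.sum_filter, Finset.sum_filter, Finset.sum_filter,
    Finset.sum_filter, Finset.sum_filter, Fintype.sum_sum_type, Fintype.sum_sum_type]
  simp only [Sum.elim_inl, Sum.elim_inr]
  grind


lemma netOutflow_empty {V E : Type*} [Fintype E] (esrc edst : E → V) (f : E → ℝ) (v : V)
    (h1 : ∀ e, esrc e ≠ v) (h2 : ∀ e, edst e ≠ v) : netOutflow esrc edst f v = 0 := by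
  unfold netOutflow
  rw [Finset.filter_eq_empty_iff.mpr (fun e _ => h1 e),
      Finset.filter_eq_empty_iff.mpr (fun e _ => h2 e)]
  simp

lemma netOutflow_subtype {V E : Type*} [Fintype E] {p : V → Prop} (esrc edst : E → V)
    (hs : ∀ e, p (esrc e)) (ht : ∀ e, p (edst e)) (f : E → ℝ) (v : V) (hv : p v) :
    netOutflow (fun e => (⟨esrc e, hs e⟩ : {v // p v}))
      (fun e => (⟨edst e, ht e⟩ : {v // p v})) f ⟨v, hv⟩
      = netOutflow esrc edst f v := by
  unfold netOutflow
  simp only [Subtype.mk.injEq]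

/-- Interdicted Miller–Naor reduction: for any interdiction set `R` consisting of
non-terminal vertices `RV` and arcs `RE`, the interdicted network `G ∖ R` (obtained by
removing the vertices of `RV`, the arcs of `RE` and all arcs incident to `RV`) admits a
saturating flow if and only if the interdicted circulation network `Ĝ(R)` (obtained from
`Ĝ` by removing the arcs of `RE` and the arcs incident to `RV`, but keeping all added
tree arcs) admits a circulation. -/
theorem statement3 {V E : Type*} [Fintype V] [LinearOrder V] [Fintype E] [DecidableEq E]
    (esrc edst : E → V) (l u : E → ℕ) (hlu : ∀ e, l e ≤ u e)
    (S T : Finset V) (hST : Disjoint S T) (d : V → ℤ)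
    (hdS : ∀ s ∈ S, d s < 0) (hdT : ∀ t ∈ T, 0 < d t)
    (hd0 : ∀ v, v ∉ S → v ∉ T → d v = 0)
    (hbal : -(∑ s ∈ S, d s) = ∑ t ∈ T, d t)
    (Tr : SimpleGraph V) (hacyc : Tr.IsAcyclic)
    (hconn : ∀ a ∈ Tr.support ∪ ↑S ∪ ↑T, ∀ b ∈ Tr.support ∪ ↑S ∪ ↑T, Tr.Reachable a b)
    (hnew : ∀ e : E, ¬ Tr.Adj (esrc e) (edst e))
    (RV : Finset V) (RE : Finset E) (hRV : ∀ v ∈ RV, v ∉ S ∧ v ∉ T) :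
    (∃ f : {e : E // e ∉ RE ∧ esrc e ∉ RV ∧ edst e ∉ RV} → ℝ,
      IsSaturatingFlow
        (fun e => (⟨esrc e.1, e.2.2.1⟩ : {v : V // v ∉ RV}))
        (fun e => (⟨edst e.1, e.2.2.2⟩ : {v : V // v ∉ RV}))
        (fun e => l e.1) (fun e => u e.1) (fun v => d v.1) f) ↔
    (∃ g : ({e : E // e ∉ RE ∧ esrc e ∉ RV ∧ edst e ∉ RV} ⊕ TreeArc Tr d) → ℝ,
      IsCirculation
        (Sum.elim (fun e => esrc e.1) (fun q => q.val.1))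
        (Sum.elim (fun e => edst e.1) (fun q => q.val.2))
        (Sum.elim (fun e => (l e.1 : ℤ)) (fun q => treeSide Tr d q.val.1 q.val.2))
        (Sum.elim (fun e => (u e.1 : ℤ)) (fun q => treeSide Tr d q.val.1 q.val.2))
        g) := by
  classical
  have hleft_eq : ∀ (f : {e : E // e ∉ RE ∧ esrc e ∉ RV ∧ edst e ∉ RV} → ℝ) (v : V)
      (hv : v ∉ RV),
      netOutflow (fun e => (⟨esrc e.1, e.2.2.1⟩ : {v : V // v ∉ RV}))
        (fun e => (⟨edst e.1, e.2.2.2⟩ : {v : V // v ∉ RV})) f ⟨v, hv⟩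
      = netOutflow (fun e => esrc e.1) (fun e => edst e.1) f v := by
    intro f v hv
    exact netOutflow_subtype (p := fun v => v ∉ RV) (fun e => esrc e.1) (fun e => edst e.1)
      (fun e => e.2.2.1) (fun e => e.2.2.2) f v hv
  have htreeflux : ∀ v : V, netOutflow (fun q : TreeArc Tr d => q.val.1) (fun q => q.val.2)
      (fun q => (treeSide Tr d q.val.1 q.val.2 : ℝ)) v = (d v : ℝ) := by
    intro v
    have h := arc_flux Tr S T hST d hdS hdT hd0 hbal hacyc hconn v
    unfold netOutflow
    have h2 : ((∑ q ∈ Finset.univ.filter (fun q : TreeArc Tr d => q.val.1 = v),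
        treeSide Tr d q.val.1 q.val.2
      - ∑ q ∈ Finset.univ.filter (fun q : TreeArc Tr d => q.val.2 = v),
        treeSide Tr d q.val.1 q.val.2 : ℤ) : ℝ) = ((d v : ℤ) : ℝ) := by exact_mod_cast h
    push_cast at h2
    convert h2 using 3 <;> (ext q; simp)
  have hdRV : ∀ v ∈ RV, d v = 0 := fun v hv => hd0 v (hRV v hv).1 (hRV v hv).2
  have hempty : ∀ (f : {e : E // e ∉ RE ∧ esrc e ∉ RV ∧ edst e ∉ RV} → ℝ) (v : V),
      v ∈ RV → netOutflow (fun e => esrc e.1) (fun e => edst e.1) f v = 0 := by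
    intro f v hv
    exact netOutflow_empty _ _ f v (fun e he => e.2.2.1 (by rw [he]; exact hv))
      (fun e he => e.2.2.2 (by rw [he]; exact hv))
  constructor
  · rintro ⟨f, hfb, hfc⟩
    refine ⟨Sum.elim f (fun q => (treeSide Tr d q.val.1 q.val.2 : ℝ)), ?_, ?_⟩
    · rintro (e | q)
      · have := hfb e
        simp only [Sum.elim_inl]
        exact ⟨by exact_mod_cast this.1, by exact_mod_cast this.2⟩
      · simp only [Sum.elim_inr]
        exact ⟨le_refl _, le_refl _⟩
    · intro v
      rw [netOutflow_sum_elim, htreeflux v]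
      by_cases hv : v ∈ RV
      · rw [hempty f v hv, hdRV v hv]
        simp
      · have hc := hfc ⟨v, hv⟩
        rw [hleft_eq f v hv] at hc
        rw [hc]
        ring
  · rintro ⟨g, hgb, hgc⟩
    have hval : (fun q => g (Sum.inr q))
        = fun q : TreeArc Tr d => (treeSide Tr d q.val.1 q.val.2 : ℝ) := by
      funext q
      have h1 := (hgb (Sum.inr q)).1
      have h2 := (hgb (Sum.inr q)).2
      simp only [Sum.elim_inr] at h1 h2
      exact le_antisymm h2 h1
    refine ⟨fun e => g (Sum.inl e), ?_, ?_⟩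
    · intro e
      have := hgb (Sum.inl e)
      simp only [Sum.elim_inl] at this
      exact ⟨by exact_mod_cast this.1, by exact_mod_cast this.2⟩
    · rintro ⟨v, hv⟩
      rw [hleft_eq _ v hv]
      have hcons := hgc v
      have hg' : g = Sum.elim (fun e => g (Sum.inl e)) (fun q => g (Sum.inr q)) := by
        funext x; cases x <;> rfl
      rw [hg', netOutflow_sum_elim, hval, htreeflux v] at hcons
      linarith
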